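/- Let p be an odd positive integer and let q and q′ be integers coprime to 2p. For an integer s define E(q, s) = (1/p) · Σ_{λ ∈ ℂ, λ^p = 1} (−1)^{s+1} λ^{s+q} / ((λ^q + 1)(λ + 1)) (this is the η-invariant η(X(p), g_{p,q}, α_s)). If there exists an integer a coprime to 2p such that E(q, s) = E(q′, a·s) for every integer s, then q′ ≡ q (mod 2p) or q·q′ ≡ 1 (mod 2p). (This is the number-theoretic content of the theorem: if the metrics g_{p,q} and g_{p,q′} lie in the same component of the moduli space of positive scalar curvature metrics on X(p), so that their η-invariants agree up to a permutation s ↦ a·s of the Pin^c structures, then q′ ≡ q^{±1} (mod 2p).) -/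

import Mathlib

/-- The η-invariant `η(X(p), g_{p,q}, α_s)` of the Pin^c Dirac operator on the flip-spun
lens space `X(p)` with the metric `g_{p,q}`, twisted by the `U(1)` representation `α_s`. -/
noncomputable def etaInv (p : ℕ) (q s : ℤ) : ℂ :=
  (1 / (p : ℂ)) *
    ∑ᶠ z ∈ {z : ℂ | z ^ p = 1},
      (-1 : ℂ) ^ (s + 1) * z ^ (s + q) / ((z ^ q + 1) * (z + 1))



open Polynomial Finset

local notation "S" p => Polynomial.nthRootsFinset p (1 : ℂ)

section helpers

variable {p : ℕ}

lemma mem_S (hp : 0 < p) {z : ℂ} (hz : z ∈ S p) : z ^ p = 1 :=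
  (Polynomial.mem_nthRootsFinset hp (1 : ℂ)).1 hz

lemma S_ne_zero (hp : 0 < p) {z : ℂ} (hz : z ∈ S p) : z ≠ 0 := by
  intro h
  have := mem_S hp hz
  rw [h, zero_pow hp.ne'] at this
  exact zero_ne_one this

lemma zpow_mem_S (hp : 0 < p) {z : ℂ} (hz : z ∈ S p) (k : ℤ) : z ^ k ∈ S p := by
  rw [Polynomial.mem_nthRootsFinset hp]
  rw [← zpow_natCast (z ^ k) p, ← zpow_mul, mul_comm, zpow_mul, zpow_natCast,
    mem_S hp hz, one_zpow]

lemma S_ne_neg_one (hp : 0 < p) (hpodd : Odd p) {z : ℂ} (hz : z ∈ S p) : z + 1 ≠ 0 := by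
  intro h
  have hz1 : z = -1 := by linear_combination h
  have h2 := mem_S hp hz
  rw [hz1, hpodd.neg_one_pow] at h2
  norm_num at h2

/-- orthogonality of characters -/
lemma sum_S_zpow (hp : 0 < p) (e : ℤ) :
    ∑ z ∈ S p, z ^ e = if (p : ℤ) ∣ e then (p : ℂ) else 0 := by
  obtain ⟨ζ, hζ⟩ : ∃ ζ : ℂ, IsPrimitiveRoot ζ p := ⟨_, Complex.isPrimitiveRoot_exp p hp.ne'⟩
  by_cases hd : (p : ℤ) ∣ e
  · obtain ⟨k, rfl⟩ := hd
    rw [if_pos ⟨k, rfl⟩]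
    have h1 : ∀ z ∈ S p, z ^ ((p : ℤ) * k) = 1 := by
      intro z hz
      rw [zpow_mul, zpow_natCast, mem_S hp hz, one_zpow]
    rw [Finset.sum_congr rfl h1, Finset.sum_const, hζ.card_nthRootsFinset]
    simp
  · rw [if_neg hd]
    have hζS : ζ ∈ S p := by
      rw [Polynomial.mem_nthRootsFinset hp]; exact hζ.pow_eq_one
    have hζ0 : ζ ≠ 0 := S_ne_zero hp hζS
    have hne : ζ ^ e ≠ 1 := fun h1 => hd ((hζ.zpow_eq_one_iff_dvd e).1 h1)
    have key : ∑ z ∈ S p, z ^ e = ζ ^ e * ∑ z ∈ S p, z ^ e := by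
      rw [Finset.mul_sum]
      refine Finset.sum_nbij' (fun z => ζ⁻¹ * z) (fun z => ζ * z) ?_ ?_ ?_ ?_ ?_
      · intro z hz
        rw [Polynomial.mem_nthRootsFinset hp, mul_pow, inv_pow, mem_S hp hζS,
          mem_S hp hz, inv_one, one_mul]
      · intro z hz
        rw [Polynomial.mem_nthRootsFinset hp, mul_pow, mem_S hp hζS, mem_S hp hz, one_mul]
      · intro z _; field_simp
      · intro z _; field_simp
      · intro z hz
        rw [mul_zpow, ← mul_assoc, ← mul_zpow, mul_inv_cancel₀ hζ0, one_zpow, one_mul]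
    have h0 : (1 - ζ ^ e) * ∑ z ∈ S p, z ^ e = 0 := by linear_combination key
    rcases mul_eq_zero.1 h0 with h | h
    · exact absurd (by linear_combination -h) hne
    · exact h
end helpers

lemma etaInv_eq {p : ℕ} (hp : 0 < p) (q s : ℤ) :
    etaInv p q s = (1 / (p : ℂ)) * ∑ z ∈ S p,
      (-1 : ℂ) ^ (s + 1) * z ^ (s + q) / ((z ^ q + 1) * (z + 1)) := by
  have hset : {z : ℂ | z ^ p = 1} = ↑(S p) := by
    ext z; simp [Polynomial.mem_nthRootsFinset hp]
  rw [etaInv, hset, finsum_mem_coe_finset]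

lemma extract {p : ℕ} (hp : 0 < p) (hpodd : Odd p) (q c : ℤ) (hc : Odd c)
    {z w₀ : ℂ} (hz : z ∈ S p) (hw₀ : w₀ ∈ S p)
    (huniq : ∀ w ∈ S p, (w ^ c = z ↔ w = w₀)) :
    ∑ s ∈ Finset.range p, (-z) ^ (-(s : ℤ)) * etaInv p q (c * s)
      = - (w₀ ^ q / ((w₀ ^ q + 1) * (w₀ + 1))) := by
  classical
  have hp0 : (p : ℂ) ≠ 0 := Nat.cast_ne_zero.2 hp.ne'
  have hz0 : z ≠ 0 := S_ne_zero hp hz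
  have hm1 : (-1 : ℂ) ≠ 0 := by norm_num
  -- pointwise rewriting of the summand
  have hterm : ∀ s : ℕ, ∀ w ∈ S p,
      (-z) ^ (-(s : ℤ)) * ((-1 : ℂ) ^ (c * (s : ℤ) + 1) * w ^ (c * (s : ℤ) + q)
        / ((w ^ q + 1) * (w + 1)))
      = (- (w ^ q) / ((w ^ q + 1) * (w + 1))) * (w ^ c * z⁻¹) ^ s := by
    intro s w hw
    have hw0 : w ≠ 0 := S_ne_zero hp hw
    have h1 : (-1 : ℂ) ^ (c * (s : ℤ) + 1) = (-1 : ℂ) ^ ((s : ℤ)) * (-1) := by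
      rw [zpow_add₀ hm1, zpow_one, zpow_mul, hc.neg_one_zpow]
    have h3 : w ^ (c * (s : ℤ) + q) = (w ^ c) ^ ((s : ℤ)) * w ^ q := by
      rw [zpow_add₀ hw0, zpow_mul]
    have h4 : (-z) ^ (-(s : ℤ)) = (-1 : ℂ) ^ (-(s : ℤ)) * z ^ (-(s : ℤ)) := by
      rw [neg_eq_neg_one_mul, mul_zpow]
    have h5 : (w ^ c * z⁻¹) ^ s = (w ^ c) ^ ((s : ℤ)) * z ^ (-(s : ℤ)) := by
      rw [mul_pow, ← zpow_natCast (w ^ c) s, ← zpow_natCast z⁻¹ s, inv_zpow, ← zpow_neg]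
    have h6 : (-1 : ℂ) ^ (-(s : ℤ)) * (-1 : ℂ) ^ ((s : ℤ)) = 1 := by
      rw [← zpow_add₀ hm1]; norm_num
    rw [h1, h3, h4, h5]
    rw [div_eq_mul_inv, div_eq_mul_inv]
    linear_combination (- z ^ (-(s : ℤ)) * (w ^ c) ^ ((s : ℤ)) * w ^ q
      * ((w ^ q + 1) * (w + 1))⁻¹) * h6
  -- geometric sum
  have hgeom : ∀ w ∈ S p, ∑ s ∈ Finset.range p, (w ^ c * z⁻¹) ^ s
      = if w = w₀ then (p : ℂ) else 0 := by
    intro w hw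
    have hu : (w ^ c * z⁻¹) ^ p = 1 := by
      have := mem_S hp (zpow_mem_S hp hw c)
      rw [mul_pow, inv_pow, this, mem_S hp hz, inv_one, one_mul]
    by_cases hww : w = w₀
    · rw [if_pos hww]
      have : w ^ c * z⁻¹ = 1 := by
        rw [(mul_inv_eq_one₀ hz0)]
        exact (huniq w hw).2 hww
      simp [this]
    · rw [if_neg hww]
      have hu1 : w ^ c * z⁻¹ ≠ 1 := by
        intro h1
        exact hww ((huniq w hw).1 ((mul_inv_eq_one₀ hz0).1 h1))
      rw [geom_sum_eq hu1, hu]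
      simp
  -- main computation
  calc ∑ s ∈ Finset.range p, (-z) ^ (-(s : ℤ)) * etaInv p q (c * s)
      = (1 / (p : ℂ)) * ∑ w ∈ S p, ∑ s ∈ Finset.range p,
          (-z) ^ (-(s : ℤ)) * ((-1 : ℂ) ^ (c * (s : ℤ) + 1) * w ^ (c * (s : ℤ) + q)
            / ((w ^ q + 1) * (w + 1))) := by
        rw [Finset.mul_sum]
        conv_rhs => rw [Finset.sum_congr rfl fun w _ => Finset.mul_sum (Finset.range p)
          (fun s => (-z) ^ (-(s : ℤ)) * ((-1 : ℂ) ^ (c * (s : ℤ) + 1)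
            * w ^ (c * (s : ℤ) + q) / ((w ^ q + 1) * (w + 1)))) ((1:ℂ)/p)]
        rw [Finset.sum_comm]
        refine Finset.sum_congr rfl fun s _ => ?_
        rw [etaInv_eq hp, Finset.mul_sum, Finset.mul_sum]
        refine Finset.sum_congr rfl fun w _ => ?_
        ring
    _ = (1 / (p : ℂ)) * ∑ w ∈ S p,
          (- (w ^ q) / ((w ^ q + 1) * (w + 1))) * (if w = w₀ then (p : ℂ) else 0) := by
        refine congrArg _ (Finset.sum_congr rfl fun w hw => ?_)
        rw [← hgeom w hw, Finset.mul_sum]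
        exact Finset.sum_congr rfl fun s _ => hterm s w hw
    _ = (1 / (p : ℂ)) * ∑ w ∈ S p,
          (if w = w₀ then (- (w ^ q) / ((w ^ q + 1) * (w + 1))) * (p : ℂ) else 0) := by
        refine congrArg _ (Finset.sum_congr rfl fun w _ => ?_)
        split_ifs <;> simp
    _ = - (w₀ ^ q / ((w₀ ^ q + 1) * (w₀ + 1))) := by
        rw [Finset.sum_ite_eq' (S p) w₀, if_pos hw₀]
        rw [show (1 / (p : ℂ)) * (-(w₀ ^ q) / ((w₀ ^ q + 1) * (w₀ + 1)) * p)
             = (-(w₀ ^ q / ((w₀ ^ q + 1) * (w₀ + 1)))) * ((p : ℂ) * (1 / p)) from by ring]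
        rw [mul_one_div, div_self hp0, mul_one]

lemma pow_ab {p : ℕ} (hp : 0 < p) {a b : ℤ} (hab : (p : ℤ) ∣ a * b - 1)
    {x : ℂ} (hx : x ∈ S p) : x ^ (a * b) = x := by
  obtain ⟨k, hk⟩ := hab
  have hx0 : x ≠ 0 := S_ne_zero hp hx
  have h1 : a * b = (p : ℤ) * k + 1 := by linarith
  rw [h1, zpow_add₀ hx0, zpow_one, zpow_mul, zpow_natCast, mem_S hp hx, one_zpow, one_mul]

lemma key1 {p : ℕ} (hp : 0 < p) (hpodd : Odd p) (q q' a b : ℤ)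
    (haodd : Odd a) (hab : (p : ℤ) ∣ a * b - 1)
    (h : ∀ s : ℤ, etaInv p q s = etaInv p q' (a * s))
    {z : ℂ} (hz : z ∈ S p) :
    z ^ q / ((z ^ q + 1) * (z + 1)) = (z ^ b) ^ q' / (((z ^ b) ^ q' + 1) * (z ^ b + 1)) := by
  have hzb : z ^ b ∈ S p := zpow_mem_S hp hz b
  have e1 := extract hp hpodd q 1 odd_one hz hz
    (fun w hw => by rw [zpow_one])
  have e2 := extract hp hpodd q' a haodd hz hzb ?_
  · have e3 : ∑ s ∈ Finset.range p, (-z) ^ (-(s : ℤ)) * etaInv p q (1 * s)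
        = ∑ s ∈ Finset.range p, (-z) ^ (-(s : ℤ)) * etaInv p q' (a * s) :=
      Finset.sum_congr rfl fun s _ => by rw [one_mul, h]
    have := e1 ▸ e2 ▸ e3
    exact neg_injective this
  · intro w hw
    constructor
    · intro hwz
      have : (w ^ a) ^ b = w := by rw [← zpow_mul]; exact pow_ab hp hab hw
      rw [← this, hwz]
    · intro hwz
      rw [hwz, ← zpow_mul, mul_comm b a]
      exact pow_ab hp hab hz

/-- the three-term exponential identity -/
lemma key2 {p : ℕ} (hp : 0 < p) (hpodd : Odd p) (q q' a b : ℤ)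
    (haodd : Odd a) (hab : (p : ℤ) ∣ a * b - 1)
    (h : ∀ s : ℤ, etaInv p q s = etaInv p q' (a * s))
    {z : ℂ} (hz : z ∈ S p) :
    z ^ (q + b * q' + b) + z ^ (q + b) + z ^ q
      = z ^ (b * q' + q + 1) + z ^ (b * q' + 1) + z ^ (b * q') := by
  have hz0 : z ≠ 0 := S_ne_zero hp hz
  have hzb : z ^ b ∈ S p := zpow_mem_S hp hz b
  have hzc : z ^ (b * q') ∈ S p := zpow_mem_S hp hz _
  have hzq : z ^ q ∈ S p := zpow_mem_S hp hz q
  have hD1 : (z ^ q + 1) * (z + 1) ≠ 0 :=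
    mul_ne_zero (S_ne_neg_one hp hpodd hzq) (S_ne_neg_one hp hpodd hz)
  have hc : (z ^ b) ^ q' = z ^ (b * q') := by rw [← zpow_mul]
  have hD2 : ((z ^ b) ^ q' + 1) * (z ^ b + 1) ≠ 0 := by
    rw [hc]
    exact mul_ne_zero (S_ne_neg_one hp hpodd hzc) (S_ne_neg_one hp hpodd hzb)
  have hk := key1 hp hpodd q q' a b haodd hab h hz
  have hcross : z ^ q * (((z ^ b) ^ q' + 1) * (z ^ b + 1))
      = (z ^ b) ^ q' * ((z ^ q + 1) * (z + 1)) := by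
    rw [div_eq_div_iff hD1 hD2] at hk
    exact hk
  rw [hc] at hcross
  have e1 : z ^ (q + b * q' + b) = z ^ q * z ^ (b * q') * z ^ b := by
    rw [zpow_add₀ hz0, zpow_add₀ hz0]
  have e2 : z ^ (q + b) = z ^ q * z ^ b := zpow_add₀ hz0 _ _
  have e3 : z ^ (b * q' + q + 1) = z ^ (b * q') * z ^ q * z := by
    rw [zpow_add₀ hz0, zpow_add₀ hz0, zpow_one]
  have e4 : z ^ (b * q' + 1) = z ^ (b * q') * z := by rw [zpow_add₀ hz0, zpow_one]
  rw [e1, e2, e3, e4]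
  linear_combination hcross

lemma count_triple {R : Type*} [DecidableEq R] (x y z t : R) :
    ((Multiset.count t ({x, y, z} : Multiset R) : ℂ))
      = (if t = x then 1 else 0) + (if t = y then 1 else 0) + (if t = z then 1 else 0) := by
  simp only [Multiset.insert_eq_cons, Multiset.count_cons, Multiset.count_singleton]
  push_cast
  ring

/-- multiset equality of the exponents mod `p` -/
lemma key3 {p : ℕ} (hp : 0 < p) (q b c : ℤ)
    (hpt : ∀ z ∈ S p, z ^ (q + c + b) + z ^ (q + b) + z ^ q
      = z ^ (c + q + 1) + z ^ (c + 1) + z ^ c) :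
    ({((q + c + b : ℤ) : ZMod p), ((q + b : ℤ) : ZMod p), ((q : ℤ) : ZMod p)} : Multiset (ZMod p))
      = {((c + q + 1 : ℤ) : ZMod p), ((c + 1 : ℤ) : ZMod p), ((c : ℤ) : ZMod p)} := by
  have hp0 : (p : ℂ) ≠ 0 := Nat.cast_ne_zero.2 hp.ne'
  refine Multiset.ext.2 fun t => ?_
  obtain ⟨t', rfl⟩ := ZMod.intCast_surjective t
  -- sum both sides against z ^ (-t')
  have hsum : ∀ e : ℤ, ∑ z ∈ S p, z ^ e * z ^ (-t')
      = if (p : ℤ) ∣ e - t' then (p : ℂ) else 0 := by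
    intro e
    rw [← sum_S_zpow hp (e - t')]
    refine Finset.sum_congr rfl fun z hz => ?_
    rw [← zpow_add₀ (S_ne_zero hp hz), sub_eq_add_neg]
  have hS : (∑ z ∈ S p, (z ^ (q + c + b) + z ^ (q + b) + z ^ q) * z ^ (-t'))
      = ∑ z ∈ S p, (z ^ (c + q + 1) + z ^ (c + 1) + z ^ c) * z ^ (-t') :=
    Finset.sum_congr rfl fun z hz => by rw [hpt z hz]
  have expand : ∀ e₁ e₂ e₃ : ℤ, (∑ z ∈ S p, (z ^ e₁ + z ^ e₂ + z ^ e₃) * z ^ (-t'))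
      = (if (p : ℤ) ∣ e₁ - t' then (p : ℂ) else 0)
        + (if (p : ℤ) ∣ e₂ - t' then (p : ℂ) else 0)
        + (if (p : ℤ) ∣ e₃ - t' then (p : ℂ) else 0) := by
    intro e₁ e₂ e₃
    rw [← hsum e₁, ← hsum e₂, ← hsum e₃, ← Finset.sum_add_distrib, ← Finset.sum_add_distrib]
    exact Finset.sum_congr rfl fun z _ => by ring
  rw [expand, expand] at hS
  -- convert the divisibility conditions to equalities in `ZMod p`
  have hconv : ∀ e : ℤ, ((p : ℤ) ∣ e - t') ↔ ((t' : ZMod p) = ((e : ℤ) : ZMod p)) := by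
    intro e
    rw [← ZMod.intCast_zmod_eq_zero_iff_dvd]
    push_cast
    constructor
    · intro h1; linear_combination -h1
    · intro h1; linear_combination -h1
  have hC : ((Multiset.count ((t' : ℤ) : ZMod p)
        ({((q + c + b : ℤ) : ZMod p), ((q + b : ℤ) : ZMod p), ((q : ℤ) : ZMod p)} :
          Multiset (ZMod p)) : ℂ))
      = ((Multiset.count ((t' : ℤ) : ZMod p)
        ({((c + q + 1 : ℤ) : ZMod p), ((c + 1 : ℤ) : ZMod p), ((c : ℤ) : ZMod p)} :
          Multiset (ZMod p)) : ℂ)) := by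
    rw [count_triple, count_triple]
    simp only [← hconv]
    have hmain : ∀ A B C A' B' C' : Prop, ∀ (_ : Decidable A) (_ : Decidable B)
        (_ : Decidable C) (_ : Decidable A') (_ : Decidable B') (_ : Decidable C'),
        ((if A then (p:ℂ) else 0) + (if B then (p:ℂ) else 0) + (if C then (p:ℂ) else 0)
          = (if A' then (p:ℂ) else 0) + (if B' then (p:ℂ) else 0) + (if C' then (p:ℂ) else 0)) →
        ((if A then (1:ℂ) else 0) + (if B then (1:ℂ) else 0) + (if C then (1:ℂ) else 0)
          = (if A' then (1:ℂ) else 0) + (if B' then (1:ℂ) else 0)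
            + (if C' then (1:ℂ) else 0)) := by
      intro A B C A' B' C' dA dB dC dA' dB' dC' hh
      have hmul : ∀ P : Prop, ∀ _ : Decidable P,
          (if P then (p:ℂ) else 0) = p * (if P then (1:ℂ) else 0) := by
        intro P dP; split_ifs <;> simp
      rw [hmul A, hmul B, hmul C, hmul A', hmul B', hmul C', ← mul_add, ← mul_add,
        ← mul_add, ← mul_add] at hh
      exact mul_left_cancel₀ hp0 hh
    exact hmain _ _ _ _ _ _ _ _ _ _ _ _ hS
  exact_mod_cast hC

lemma pair_cases {R : Type*} [DecidableEq R] {a1 a2 b1 b2 : R}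
    (h : ({a1, a2} : Multiset R) = {b1, b2}) :
    (a1 = b1 ∧ a2 = b2) ∨ (a1 = b2 ∧ a2 = b1) := by
  have h1 : a1 ∈ ({b1, b2} : Multiset R) := h ▸ (by simp)
  simp only [Multiset.insert_eq_cons, Multiset.mem_cons, Multiset.mem_singleton] at h1
  rcases h1 with h1 | h1
  · left
    refine ⟨h1, ?_⟩
    rw [Multiset.insert_eq_cons, Multiset.insert_eq_cons, h1] at h
    exact Multiset.singleton_inj.1 ((Multiset.cons_inj_right b1).1 h)
  · right
    refine ⟨h1, ?_⟩
    rw [Multiset.insert_eq_cons, Multiset.insert_eq_cons, h1,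
      show (b1 ::ₘ {b2} : Multiset R) = b2 ::ₘ {b1} from by
        rw [← Multiset.cons_zero b2, Multiset.cons_swap b1 b2 0, Multiset.cons_zero]] at h
    exact Multiset.singleton_inj.1 ((Multiset.cons_inj_right b2).1 h)

lemma triple_cases {R : Type*} [DecidableEq R] {a1 a2 a3 b1 b2 b3 : R}
    (h : ({a1, a2, a3} : Multiset R) = {b1, b2, b3}) :
    (a1 = b1 ∧ ({a2, a3} : Multiset R) = {b2, b3})
    ∨ (a1 = b2 ∧ ({a2, a3} : Multiset R) = {b1, b3})
    ∨ (a1 = b3 ∧ ({a2, a3} : Multiset R) = {b1, b2}) := by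
  have h1 : a1 ∈ ({b1, b2, b3} : Multiset R) := h ▸ (by simp)
  simp only [Multiset.insert_eq_cons, Multiset.mem_cons, Multiset.mem_singleton] at h1
  simp only [Multiset.insert_eq_cons] at h ⊢
  rcases h1 with h1 | h1 | h1
  · left
    refine ⟨h1, ?_⟩
    rw [h1] at h
    exact (Multiset.cons_inj_right b1).1 h
  · right; left
    refine ⟨h1, ?_⟩
    rw [h1, show (b1 ::ₘ b2 ::ₘ {b3} : Multiset R) = b2 ::ₘ b1 ::ₘ {b3} from
      Multiset.cons_swap b1 b2 {b3}] at h
    exact (Multiset.cons_inj_right b2).1 h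
  · right; right
    refine ⟨h1, ?_⟩
    rw [h1, show (b1 ::ₘ b2 ::ₘ {b3} : Multiset R) = b3 ::ₘ b1 ::ₘ {b2} from by
      rw [← Multiset.cons_zero b3, Multiset.cons_swap b2 b3 0,
        Multiset.cons_swap b1 b3 (b2 ::ₘ 0), Multiset.cons_zero]] at h
    exact (Multiset.cons_inj_right b3).1 h

/-- the combinatorial heart: matching the two exponent multisets -/
lemma combinat {p : ℕ} (hp1 : 1 < p) {Q B Q2 : ZMod p}
    (hQ : IsUnit Q) (h2 : IsUnit (2 : ZMod p))
    (hM : ({Q + B * Q2 + B, Q + B, Q} : Multiset (ZMod p))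
      = {B * Q2 + Q + 1, B * Q2 + 1, B * Q2}) :
    Q2 = Q ∨ Q * Q2 = 1 := by
  haveI : Fact (1 < p) := ⟨hp1⟩
  -- reorder the multisets
  have trev : ∀ x y z : ZMod p, ({x, y, z} : Multiset (ZMod p)) = {z, y, x} := by
    intro x y z
    simp only [Multiset.insert_eq_cons]
    rw [← Multiset.cons_zero z, Multiset.cons_swap y z 0, Multiset.cons_swap x z (y ::ₘ 0),
      Multiset.cons_swap x y 0, Multiset.cons_zero]
  have hM' : ({Q, Q + B, Q + B * Q2 + B} : Multiset (ZMod p))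
      = {B * Q2, B * Q2 + 1, B * Q2 + Q + 1} :=
    (trev _ _ _).trans (hM.trans (trev _ _ _))
  rcases triple_cases hM' with ⟨e1, hrest⟩ | ⟨e1, hrest⟩ | ⟨e1, hrest⟩
  · rcases pair_cases hrest with ⟨e2, e3⟩ | ⟨e2, e3⟩
    · -- case 1 : B = 1, Q2 = Q
      left
      have hB : B = 1 := by linear_combination e2 - e1
      rw [hB, one_mul] at e1
      exact e1.symm
    · -- case 2 : contradiction via 2Q = 0
      exfalso
      have h2Q : (2 : ZMod p) * Q = 0 := by linear_combination e1 - e2 + e3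
      have hQ0 : Q = 0 := h2.mul_left_cancel (by rw [h2Q, mul_zero])
      exact hQ.ne_zero hQ0
  · rcases pair_cases hrest with ⟨e2, e3⟩ | ⟨e2, e3⟩
    · -- case 3 : contradiction via 2 = 0
      exfalso
      have h20 : (2 : ZMod p) = 0 := by linear_combination -e1 + e2 - e3
      exact h2.ne_zero h20
    · -- case 4 : contradiction via 2Q = 0
      exfalso
      have h2Q : (2 : ZMod p) * Q = 0 := by linear_combination e1 - e2 + e3
      have hQ0 : Q = 0 := h2.mul_left_cancel (by rw [h2Q, mul_zero])
      exact hQ.ne_zero hQ0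
  · rcases pair_cases hrest with ⟨e2, e3⟩ | ⟨e2, e3⟩
    · -- case 5 : contradiction via 2 = 0
      exfalso
      have h20 : (2 : ZMod p) = 0 := by linear_combination -e1 + e2 - e3
      exact h2.ne_zero h20
    · -- case 6 : Q * Q2 = 1
      right
      have hC : B * Q2 = -1 := by linear_combination -e1
      have hB : Q + B = 0 := by linear_combination e2 - e1
      linear_combination Q2 * hB - hC

lemma odd_of_gcd {x : ℤ} {p : ℕ} (h : Int.gcd x (2 * p) = 1) : Odd x := by
  rcases Int.even_or_odd x with he | ho
  · exfalso
    have h2 : (2 : ℤ) ∣ x := he.two_dvd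
    have h2' : (2 : ℤ) ∣ 2 * (p : ℤ) := ⟨p, rfl⟩
    have := Int.dvd_gcd h2 h2'
    rw [h] at this
    norm_num at this
  · exact ho

lemma unit_of_coprime' {p : ℕ} {x : ℤ} (h : IsCoprime x (p : ℤ)) :
    IsUnit ((x : ZMod p)) := by
  obtain ⟨u, v, huv⟩ := h
  apply IsUnit.of_mul_eq_one ((u : ZMod p))
  have : ((u * x + v * p : ℤ) : ZMod p) = ((1 : ℤ) : ZMod p) := by rw [huv]
  push_cast at this
  rw [ZMod.natCast_self, mul_zero, add_zero] at this
  rw [mul_comm]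
  exact this


/-- If the η-invariants of `g_{p,q}` and `g_{p,q′}` agree up to a permutation `s ↦ a·s`
of the Pin^c structures, then `q′ ≡ q^{±1} (mod 2p)`. -/
theorem stmt11 (p : ℕ) (hp : 0 < p) (hpodd : Odd p) (q q' : ℤ)
    (hq : Int.gcd q (2 * p) = 1) (hq' : Int.gcd q' (2 * p) = 1)
    (h : ∃ a : ℤ, Int.gcd a (2 * p) = 1 ∧ ∀ s : ℤ, etaInv p q s = etaInv p q' (a * s)) :
    q' ≡ q [ZMOD (2 * p : ℤ)] ∨ q * q' ≡ 1 [ZMOD (2 * p : ℤ)] := by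

  obtain ⟨a, ha, hae⟩ := h
  have hqodd : Odd q := odd_of_gcd hq
  have hq'odd : Odd q' := odd_of_gcd hq'
  have haodd : Odd a := odd_of_gcd ha
  by_cases hp1 : p = 1
  · left
    subst hp1
    show q' % (2 * (1:ℕ)) = q % (2 * (1:ℕ))
    push_cast
    rw [Int.odd_iff.1 hq'odd, Int.odd_iff.1 hqodd]
  have hp1' : 1 < p := lt_of_le_of_ne hp (Ne.symm hp1)
  -- coprimality facts
  have hqp : IsCoprime q (p : ℤ) :=
    (Int.isCoprime_iff_gcd_eq_one.2 hq).of_mul_right_right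
  have hap : IsCoprime a (p : ℤ) :=
    (Int.isCoprime_iff_gcd_eq_one.2 ha).of_mul_right_right
  have h2p : IsCoprime (2 : ℤ) (p : ℤ) := by
    have : Nat.Coprime 2 p := Nat.coprime_two_left.2 hpodd
    exact_mod_cast this.isCoprime
  -- an inverse of a mod p
  obtain ⟨b, v, hbv⟩ := hap
  have hab : (p : ℤ) ∣ a * b - 1 := ⟨-v, by linear_combination hbv⟩
  -- the multiset identity
  have hpt := fun z hz => key2 hp hpodd q q' a b haodd hab hae (z := z) hz
  have hM := key3 hp q b (b * q') hpt
  push_cast at hM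
  have h2u : IsUnit (2 : ZMod p) := by
    have := unit_of_coprime' h2p
    simpa using this
  have hcomb := combinat hp1' (unit_of_coprime' hqp) h2u hM
  rcases hcomb with hc | hc
  · left
    have hpd : (p : ℤ) ∣ q - q' :=
      ((ZMod.intCast_eq_intCast_iff q' q p).1 hc).dvd
    have h2d : (2 : ℤ) ∣ q - q' := (hqodd.sub_odd hq'odd).two_dvd
    have := h2p.mul_dvd h2d hpd
    exact Int.modEq_iff_dvd.2 this
  · right
    have hc' : ((q * q' : ℤ) : ZMod p) = ((1 : ℤ) : ZMod p) := by push_cast; exact hc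
    have hpd : (p : ℤ) ∣ 1 - q * q' :=
      ((ZMod.intCast_eq_intCast_iff (q * q') 1 p).1 hc').dvd
    have h2d : (2 : ℤ) ∣ 1 - q * q' := (odd_one.sub_odd (hqodd.mul hq'odd)).two_dvd
    have := h2p.mul_dvd h2d hpd
    exact Int.modEq_iff_dvd.2 this
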